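/- Let A be symmetric positive definite and M invertible with M + Mᵀ − A symmetric positive definite. Then the symmetrized smoother M̃ = M(M + Mᵀ − A)⁻¹Mᵀ is symmetric positive definite, and M̃ − A is symmetric positive semidefinite (equivalently, xᵀAx ≤ xᵀM̃x for all x). -/

import Mathlib

open Matrix

lemma conj_dot (n : ℕ) (B C : Matrix (Fin n) (Fin n) ℝ) (x : Fin n → ℝ) :
    x ⬝ᵥ (Bᵀ * C * B) *ᵥ x = (B *ᵥ x) ⬝ᵥ C *ᵥ (B *ᵥ x) := by
  rw [← mulVec_mulVec, ← mulVec_mulVec, dotProduct_mulVec x Bᵀ, vecMul_transpose]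

theorem stmt_16 (n : ℕ) (A M : Matrix (Fin n) (Fin n) ℝ)
    (hAsym : Aᵀ = A)
    (hApd : ∀ x : Fin n → ℝ, x ≠ 0 → 0 < x ⬝ᵥ A *ᵥ x)
    (hM : IsUnit M.det)
    (hsym : (M + Mᵀ - A)ᵀ = M + Mᵀ - A)
    (hpd : ∀ x : Fin n → ℝ, x ≠ 0 → 0 < x ⬝ᵥ (M + Mᵀ - A) *ᵥ x)
    (Mt : Matrix (Fin n) (Fin n) ℝ)
    (hMt : Mt = M * (M + Mᵀ - A)⁻¹ * Mᵀ) :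
    Mtᵀ = Mt ∧
    (∀ x : Fin n → ℝ, x ≠ 0 → 0 < x ⬝ᵥ Mt *ᵥ x) ∧
    (Mt - A)ᵀ = Mt - A ∧
    (∀ x : Fin n → ℝ, x ⬝ᵥ A *ᵥ x ≤ x ⬝ᵥ Mt *ᵥ x) := by
  set N : Matrix (Fin n) (Fin n) ℝ := M + Mᵀ - A with hN
  have hNpd : N.PosDef := by
    rw [posDef_iff_dotProduct_mulVec]
    constructor
    · show Nᴴ = N
      simpa [Matrix.IsHermitian, conjTranspose_eq_transpose_of_trivial] using hsym
    · intro x hx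
      simpa using hpd x hx
  have hNinv : N⁻¹.PosDef := hNpd.inv
  have hNu : IsUnit N.det := (isUnit_iff_isUnit_det N).mp hNpd.isUnit
  have hNinvT : (N⁻¹)ᵀ = N⁻¹ := by
    rw [transpose_nonsing_inv, hsym]
  have hMtB : Mt = (Mᵀ)ᵀ * N⁻¹ * Mᵀ := by rw [hMt, transpose_transpose]
  have hMtsym : Mtᵀ = Mt := by
    rw [hMt, transpose_mul, transpose_mul, transpose_transpose, hNinvT, mul_assoc]
  have hMtu : IsUnit Mᵀ.det := by rwa [det_transpose]
  have hMtpd : ∀ x : Fin n → ℝ, x ≠ 0 → 0 < x ⬝ᵥ Mt *ᵥ x := by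
    intro x hx
    rw [hMtB, conj_dot]
    have hy : Mᵀ *ᵥ x ≠ 0 := by
      intro h
      apply hx
      have := congrArg (fun v => (Mᵀ)⁻¹ *ᵥ v) h
      simpa [mulVec_mulVec, nonsing_inv_mul _ hMtu] using this
    simpa using hNinv.dotProduct_mulVec_pos hy
  have hkey : Mt - A = (A - M)ᵀ * N⁻¹ * (A - M) := by
    have hT : (A - M)ᵀ = A - Mᵀ := by rw [transpose_sub, hAsym]
    have h1 : A - Mᵀ = M - N := by rw [hN]; abel
    have h2 : A - M = Mᵀ - N := by rw [hN]; abel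
    rw [hT, h1]
    conv_rhs => rw [h2]
    have hMN : M * N⁻¹ * N = M := by
      rw [mul_assoc, nonsing_inv_mul _ hNu, mul_one]
    rw [sub_mul, mul_nonsing_inv _ hNu, sub_mul, mul_sub, one_mul, hMN,
      ← hMt, hN]
    abel
  have hpsd : ∀ x : Fin n → ℝ, 0 ≤ x ⬝ᵥ (Mt - A) *ᵥ x := by
    intro x
    rw [hkey, conj_dot]
    simpa using hNinv.posSemidef.dotProduct_mulVec_nonneg ((A - M) *ᵥ x)
  refine ⟨hMtsym, hMtpd, ?_, ?_⟩
  · rw [transpose_sub, hMtsym, hAsym]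
  · intro x
    have := hpsd x
    rw [sub_mulVec, dotProduct_sub] at this
    linarith
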